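/- Let α > 1 and β > 0, let φ be an analytic self-map of the open unit disk D, and let g be analytic on D. Then the operator C_φV_g, defined by (C_φV_g f)(z) = ∫₀^{φ(z)} f'(ξ) g(ξ) dξ, is bounded from Z^α to Z^β if and only if sup_{z∈D} (1−|z|²)^β |g(φ(z)) (φ'(z))²| / (1−|φ(z)|²)^α < ∞ and sup_{z∈D} (1−|z|²)^β |g'(φ(z))(φ'(z))² + g(φ(z))φ''(z)| / (1−|φ(z)|²)^{α−1} < ∞. -/

import Mathlib

noncomputable section

open Set Metric MeasureTheory intervalIntegral Complex Filter

/-- The open unit disk in the complex plane. -/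
def uD : Set ℂ := Metric.ball 0 1

/-- The Zygmund-type quantity `(1-|z|^2)^a * |f''(z)|`. -/
def zygS (a : ℝ) (f : ℂ → ℂ) (z : ℂ) : ℝ := (1 - ‖z‖ ^ 2) ^ a * ‖deriv (deriv f) z‖

/-- Membership in the Zygmund-type space `Z^a`. -/
def memZ (a : ℝ) (f : ℂ → ℂ) : Prop :=
  AnalyticOn ℂ f uD ∧ ∃ M : ℝ, ∀ z ∈ uD, zygS a f z ≤ M

/-- The Zygmund-type norm `‖f‖_{Z^a} = |f 0| + |f' 0| + sup_{z ∈ D} (1-|z|^2)^a |f''(z)|`. -/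
def zNorm (a : ℝ) (f : ℂ → ℂ) : ℝ := ‖f 0‖ + ‖deriv f 0‖ + sSup (zygS a f '' uD)

/-- Membership in the weighted space `H^∞_{v_b}` (for `u` analytic on `uD`). -/
def memHv (b : ℝ) (u : ℂ → ℂ) : Prop :=
  ∃ M : ℝ, ∀ z ∈ uD, (1 - ‖z‖ ^ 2) ^ b * ‖u z‖ ≤ M

/-- `T` is a bounded operator from `Z^a` to `Z^b`. -/
def boundedOp (a b : ℝ) (T : (ℂ → ℂ) → ℂ → ℂ) : Prop :=
  (∀ f, memZ a f → memZ b (T f)) ∧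
    ∃ C > 0, ∀ f, memZ a f → zNorm b (T f) ≤ C * zNorm a f

/-- `(C_φ V_g f)(z) = ∫₀^{φ(z)} f'(ξ) g(ξ) dξ`, parametrized along the segment from `0` to `φ z`. -/
def CphiVg (g φ : ℂ → ℂ) (f : ℂ → ℂ) : ℂ → ℂ :=
  fun z => ∫ t in (0:ℝ)..1, φ z * (deriv f ((t : ℂ) * φ z) * g ((t : ℂ) * φ z))

lemma uD_open : IsOpen uD := Metric.isOpen_ball

lemma mem_uD {z : ℂ} : z ∈ uD ↔ ‖z‖ < 1 := by
  simp [uD, Metric.mem_ball, dist_eq_norm]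

lemma zero_mem_uD : (0 : ℂ) ∈ uD := mem_uD.2 (by norm_num)

lemma one_sub_sq_pos {z : ℂ} (hz : z ∈ uD) : 0 < 1 - ‖z‖ ^ 2 := by
  have h := mem_uD.1 hz
  nlinarith [norm_nonneg z]

lemma smul_mem_uD {z : ℂ} (hz : z ∈ uD) {t : ℝ} (h0 : 0 ≤ t) (h1 : t ≤ 1) :
    (t : ℂ) * z ∈ uD := by
  have h := mem_uD.1 hz
  rw [mem_uD, norm_mul, Complex.norm_real, Real.norm_eq_abs, _root_.abs_of_nonneg h0]
  calc t * ‖z‖ ≤ 1 * ‖z‖ := by nlinarith [norm_nonneg z]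
    _ < 1 := by simpa using h

/-- integral primitive along segment from 0 -/
def Pint (u : ℂ → ℂ) (z : ℂ) : ℂ := ∫ t in (0:ℝ)..1, z * u ((t : ℂ) * z)

set_option maxHeartbeats 1000000 in
lemma hasDerivAt_Pint {u : ℂ → ℂ} (hu : AnalyticOnNhd ℂ u uD) {z₀ : ℂ} (hz : z₀ ∈ uD) :
    HasDerivAt (Pint u) (u z₀) z₀ := by
  have hz1 : ‖z₀‖ < 1 := mem_uD.1 hz
  set r : ℝ := (1 + ‖z₀‖) / 2 with hr
  have hr1 : r < 1 := by rw [hr]; linarith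
  have hrz : ‖z₀‖ < r := by rw [hr]; linarith [norm_nonneg z₀]
  have hr0 : 0 < r := lt_of_le_of_lt (norm_nonneg z₀) hrz
  have hKsub : Metric.closedBall (0:ℂ) r ⊆ uD := by
    intro x hx
    rw [Metric.mem_closedBall, dist_zero_right] at hx
    exact mem_uD.2 (lt_of_le_of_lt hx hr1)
  -- continuity of u and deriv u, bounds on closed ball
  have hucont : ContinuousOn u uD := hu.continuousOn
  have hu' : AnalyticOnNhd ℂ (deriv u) uD := hu.deriv
  have hu'cont : ContinuousOn (deriv u) uD := hu'.continuousOn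
  obtain ⟨Cu, hCu⟩ := (isCompact_closedBall (0:ℂ) r).exists_bound_of_continuousOn
    (hucont.mono hKsub)
  obtain ⟨Cu', hCu'⟩ := (isCompact_closedBall (0:ℂ) r).exists_bound_of_continuousOn
    (hu'cont.mono hKsub)
  have hCu0 : 0 ≤ Cu := le_trans (norm_nonneg _) (hCu 0 (Metric.mem_closedBall_self hr0.le))
  have hCu'0 : 0 ≤ Cu' := le_trans (norm_nonneg _) (hCu' 0 (Metric.mem_closedBall_self hr0.le))
  set ε : ℝ := r - ‖z₀‖ with hε
  have hε0 : 0 < ε := by rw [hε]; linarith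
  have hball : ∀ x ∈ Metric.ball z₀ ε, ‖x‖ ≤ r := by
    intro x hx
    rw [Metric.mem_ball, dist_eq_norm] at hx
    calc ‖x‖ = ‖x - z₀ + z₀‖ := by ring_nf
      _ ≤ ‖x - z₀‖ + ‖z₀‖ := norm_add_le _ _
      _ ≤ r := by rw [hε] at hx; linarith
  have hmemK : ∀ (x : ℂ), ‖x‖ ≤ r → ∀ (t : ℝ), 0 ≤ t → t ≤ 1 →
      (t : ℂ) * x ∈ Metric.closedBall (0:ℂ) r := by
    intro x hx t ht0 ht1
    rw [Metric.mem_closedBall, dist_zero_right, norm_mul, Complex.norm_real,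
      Real.norm_eq_abs, _root_.abs_of_nonneg ht0]
    calc t * ‖x‖ ≤ 1 * r := by nlinarith [norm_nonneg x]
      _ = r := one_mul r
  set μ : Measure ℝ := volume.restrict (Set.Ioc (0:ℝ) 1) with hμ
  set F : ℂ → ℝ → ℂ := fun x t => x * u ((t : ℂ) * x) with hF
  set F' : ℂ → ℝ → ℂ := fun x t => u ((t : ℂ) * x) + x * (t : ℂ) * deriv u ((t : ℂ) * x) with hF'
  have keyiff : ∀ x : ℂ, Pint u x = ∫ t, F x t ∂μ := by
    intro x
    rw [Pint, intervalIntegral.integral_of_le zero_le_one]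
  have hcontF : ∀ x : ℂ, ‖x‖ ≤ r → ContinuousOn (F x) (Set.Icc (0:ℝ) 1) := by
    intro x hx
    apply ContinuousOn.mul continuousOn_const
    apply hucont.comp
    · exact (Complex.continuous_ofReal.continuousOn).mul continuousOn_const
    · intro t ht
      exact hKsub (hmemK x hx t ht.1 ht.2)
  have hintF : ∀ x : ℂ, ‖x‖ ≤ r → Integrable (F x) μ := by
    intro x hx
    rw [hμ]
    exact ((hcontF x hx).integrableOn_Icc).mono_set Set.Ioc_subset_Icc_self
  have hcontF' : ∀ x : ℂ, ‖x‖ ≤ r → ContinuousOn (F' x) (Set.Icc (0:ℝ) 1) := by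
    intro x hx
    have hmap : Set.MapsTo (fun t : ℝ => (t:ℂ) * x) (Set.Icc (0:ℝ) 1) uD := by
      intro t ht; exact hKsub (hmemK x hx t ht.1 ht.2)
    have hc1 : ContinuousOn (fun t : ℝ => (t:ℂ) * x) (Set.Icc (0:ℝ) 1) :=
      (Complex.continuous_ofReal.continuousOn).mul continuousOn_const
    exact (hucont.comp hc1 hmap).add
      ((continuousOn_const.mul (Complex.continuous_ofReal.continuousOn)).mul
        (hu'cont.comp hc1 hmap))
  have h_diff : ∀ᵐ t ∂μ, ∀ x ∈ Metric.ball z₀ ε, HasDerivAt (F · t) (F' x t) x := by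
    rw [hμ]
    refine (ae_restrict_mem measurableSet_Ioc).mono ?_
    intro t ht x hx
    have htx : (t:ℂ) * x ∈ uD := hKsub (hmemK x (hball x hx) t ht.1.le ht.2)
    have hud : HasDerivAt u (deriv u ((t:ℂ)*x)) ((t:ℂ)*x) :=
      ((hu _ htx).differentiableAt).hasDerivAt
    have hlin : HasDerivAt (fun x : ℂ => (t:ℂ) * x) (t:ℂ) x := by
      simpa using (hasDerivAt_id x).const_mul (t:ℂ)
    have hcomp : HasDerivAt (fun x : ℂ => u ((t:ℂ) * x)) (deriv u ((t:ℂ)*x) * (t:ℂ)) x :=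
      hud.comp x hlin
    have := (hasDerivAt_id x).mul hcomp
    simp only [hF, hF', id_eq, one_mul]
    refine this.congr_deriv ?_
    simp only [id_eq]
    ring
  have h_bound : ∀ᵐ t ∂μ, ∀ x ∈ Metric.ball z₀ ε, ‖F' x t‖ ≤ Cu + Cu' := by
    rw [hμ]
    refine (ae_restrict_mem measurableSet_Ioc).mono ?_
    intro t ht x hx
    have hxr := hball x hx
    have htx : (t:ℂ) * x ∈ Metric.closedBall (0:ℂ) r := hmemK x hxr t ht.1.le ht.2
    have h1 : ‖u ((t:ℂ)*x)‖ ≤ Cu := hCu _ htx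
    have h2 : ‖deriv u ((t:ℂ)*x)‖ ≤ Cu' := hCu' _ htx
    have h3 : ‖x * (t:ℂ)‖ ≤ 1 := by
      rw [norm_mul, Complex.norm_real, Real.norm_eq_abs, _root_.abs_of_nonneg ht.1.le]
      nlinarith [norm_nonneg x, mul_le_mul_of_nonneg_right hxr ht.1.le, ht.2, hr1,
        mul_le_mul_of_nonneg_left ht.2 hr0.le]
    calc ‖F' x t‖ ≤ ‖u ((t:ℂ)*x)‖ + ‖x * (t:ℂ) * deriv u ((t:ℂ)*x)‖ := norm_add_le _ _
      _ ≤ Cu + Cu' := by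
          have : ‖x * (t:ℂ) * deriv u ((t:ℂ)*x)‖ ≤ 1 * Cu' := by
            rw [norm_mul]
            exact mul_le_mul h3 h2 (norm_nonneg _) zero_le_one
          rw [one_mul] at this
          exact add_le_add h1 this
  have hF_meas : ∀ᶠ x in nhds z₀, AEStronglyMeasurable (F x) μ := by
    refine Filter.eventually_of_mem (Metric.ball_mem_nhds z₀ hε0) ?_
    intro x hx
    rw [hμ]
    exact (((hcontF x (hball x hx)).mono Set.Ioc_subset_Icc_self)).aestronglyMeasurable
      measurableSet_Ioc
  have hF'_meas : AEStronglyMeasurable (F' z₀) μ := by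
    rw [hμ]
    exact ((hcontF' z₀ hrz.le).mono Set.Ioc_subset_Icc_self).aestronglyMeasurable
      measurableSet_Ioc
  have hbi : Integrable (fun _ : ℝ => Cu + Cu') μ := by
    rw [hμ]
    refine (integrableOn_const_iff enorm_ne_top).2 (Or.inr ?_)
    rw [Real.volume_Ioc]
    exact ENNReal.ofReal_lt_top
  clear_value μ F F'
  have main := hasDerivAt_integral_of_dominated_loc_of_deriv_le (μ := μ) (F := F) (F' := F')
    (bound := fun _ => Cu + Cu') (Metric.ball_mem_nhds z₀ hε0) hF_meas
    (hintF z₀ hrz.le) hF'_meas h_bound hbi h_diff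
  have hmain := main.2
  -- compute ∫ F' z₀ dμ = u z₀
  have hFTC : (∫ t, F' z₀ t ∂μ) = u z₀ := by
    have heq : (∫ t, F' z₀ t ∂μ) = ∫ t in (0:ℝ)..1, F' z₀ t := by
      rw [hμ, intervalIntegral.integral_of_le zero_le_one]
    rw [heq]
    have hψ : ∀ t ∈ Set.uIcc (0:ℝ) 1,
        HasDerivAt (fun t : ℝ => (t:ℂ) * u ((t:ℂ) * z₀)) (F' z₀ t) t := by
      intro t ht
      rw [Set.uIcc_of_le zero_le_one] at ht
      have htz : (t:ℂ) * z₀ ∈ uD := hKsub (hmemK z₀ hrz.le t ht.1 ht.2)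
      have hud : HasDerivAt u (deriv u ((t:ℂ)*z₀)) ((t:ℂ)*z₀) :=
        ((hu _ htz).differentiableAt).hasDerivAt
      have hΨ : HasDerivAt (fun s : ℂ => s * u (s * z₀))
          (u ((t:ℂ)*z₀) + (t:ℂ) * (deriv u ((t:ℂ)*z₀) * z₀)) ((t:ℂ)) := by
        have hlin : HasDerivAt (fun s : ℂ => s * z₀) z₀ (t:ℂ) := by
          simpa using (hasDerivAt_id (t:ℂ)).mul_const z₀
        have hcomp : HasDerivAt (fun s : ℂ => u (s * z₀)) (deriv u ((t:ℂ)*z₀) * z₀) (t:ℂ) :=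
          hud.comp (t:ℂ) hlin
        have := (hasDerivAt_id (t:ℂ)).mul hcomp
        exact this.congr_deriv (by simp)
      have := hΨ.comp_ofReal
      simp only [hF']
      convert this using 1
      ring
    have hci : IntervalIntegrable (F' z₀) volume 0 1 := by
      apply ContinuousOn.intervalIntegrable
      rw [Set.uIcc_of_le zero_le_one]
      exact hcontF' z₀ hrz.le
    have := intervalIntegral.integral_eq_sub_of_hasDerivAt hψ hci
    rw [this]
    simp
  rw [hFTC] at hmain
  have : (fun x => ∫ t, F x t ∂μ) = Pint u := by
    funext x
    rw [keyiff x]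
  rwa [this] at hmain

lemma analyticOnNhd_Pint {u : ℂ → ℂ} (hu : AnalyticOnNhd ℂ u uD) :
    AnalyticOnNhd ℂ (Pint u) uD :=
  DifferentiableOn.analyticOnNhd
    (fun z hz => (hasDerivAt_Pint hu hz).differentiableAt.differentiableWithinAt) uD_open

def funA (g φ : ℂ → ℂ) (z : ℂ) : ℂ := g (φ z) * (deriv φ z) ^ 2

def funB (g φ : ℂ → ℂ) (z : ℂ) : ℂ :=
  deriv g (φ z) * (deriv φ z) ^ 2 + g (φ z) * deriv (deriv φ) z

lemma Tf_facts {φ g f : ℂ → ℂ} (hφ : AnalyticOnNhd ℂ φ uD) (hφm : Set.MapsTo φ uD uD)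
    (hg : AnalyticOnNhd ℂ g uD) (hf : AnalyticOnNhd ℂ f uD) :
    AnalyticOnNhd ℂ (CphiVg g φ f) uD ∧
    (∀ z ∈ uD, deriv (CphiVg g φ f) z = deriv f (φ z) * g (φ z) * deriv φ z) ∧
    (∀ z ∈ uD, deriv (deriv (CphiVg g φ f)) z =
      deriv (deriv f) (φ z) * funA g φ z + deriv f (φ z) * funB g φ z) := by
  set u : ℂ → ℂ := fun w => deriv f w * g w with hu_def
  have hu : AnalyticOnNhd ℂ u uD := (hf.deriv).mul hg
  have hTF : CphiVg g φ f = fun z => Pint u (φ z) := rfl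
  have h1 : ∀ z ∈ uD, HasDerivAt (CphiVg g φ f) (u (φ z) * deriv φ z) z := by
    intro z hz
    have hφd : HasDerivAt φ (deriv φ z) z := ((hφ z hz).differentiableAt).hasDerivAt
    exact (hasDerivAt_Pint hu (hφm hz)).comp z hφd
  have hanal : AnalyticOnNhd ℂ (CphiVg g φ f) uD :=
    DifferentiableOn.analyticOnNhd
      (fun z hz => (h1 z hz).differentiableAt.differentiableWithinAt) uD_open
  have hderiv1 : ∀ z ∈ uD, deriv (CphiVg g φ f) z = u (φ z) * deriv φ z :=
    fun z hz => (h1 z hz).deriv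
  refine ⟨hanal, fun z hz => by rw [hderiv1 z hz], ?_⟩
  intro z hz
  have hφd : HasDerivAt φ (deriv φ z) z := ((hφ z hz).differentiableAt).hasDerivAt
  have hφ'd : HasDerivAt (deriv φ) (deriv (deriv φ) z) z :=
    ((hφ.deriv z hz).differentiableAt).hasDerivAt
  have hud : HasDerivAt u (deriv u (φ z)) (φ z) := ((hu _ (hφm hz)).differentiableAt).hasDerivAt
  have h2 : HasDerivAt (fun z => u (φ z) * deriv φ z)
      ((deriv u (φ z) * deriv φ z) * deriv φ z + u (φ z) * deriv (deriv φ) z) z :=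
    (hud.comp z hφd).mul hφ'd
  have hev : deriv (CphiVg g φ f) =ᶠ[nhds z] (fun z => u (φ z) * deriv φ z) :=
    Filter.eventually_of_mem (uD_open.mem_nhds hz) (fun x hx => hderiv1 x hx)
  have hderiv2 : deriv (deriv (CphiVg g φ f)) z
      = (deriv u (φ z) * deriv φ z) * deriv φ z + u (φ z) * deriv (deriv φ) z := by
    rw [hev.deriv_eq]
    exact h2.deriv
  have hu2 : deriv u (φ z) = deriv (deriv f) (φ z) * g (φ z) + deriv f (φ z) * deriv g (φ z) := by
    have hfd : HasDerivAt (deriv f) (deriv (deriv f) (φ z)) (φ z) :=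
      ((hf.deriv _ (hφm hz)).differentiableAt).hasDerivAt
    have hgd : HasDerivAt g (deriv g (φ z)) (φ z) := ((hg _ (hφm hz)).differentiableAt).hasDerivAt
    exact (hfd.mul hgd).deriv
  rw [hderiv2, hu2, funA, funB, hu_def]
  ring

lemma zygS_nonneg (a : ℝ) (f : ℂ → ℂ) {z : ℂ} (hz : z ∈ uD) : 0 ≤ zygS a f z :=
  mul_nonneg (Real.rpow_nonneg (one_sub_sq_pos hz).le _) (norm_nonneg _)

lemma two_ineq {r : ℝ} (h0 : 0 ≤ r) (h1 : r < 1) {a : ℝ} (ha : 1 < a) :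
    (1 - r) ^ (1 - a) ≤ 2 ^ (a - 1) * (1 - r ^ 2) ^ (1 - a) := by
  have hp1 : (0:ℝ) < 1 - r ^ 2 := by nlinarith
  have hp2 : (0:ℝ) < 1 - r := by linarith
  have hle : 1 - r ^ 2 ≤ 2 * (1 - r) := by nlinarith
  have key : (2 * (1 - r)) ^ (1 - a) ≤ (1 - r ^ 2) ^ (1 - a) :=
    Real.rpow_le_rpow_of_nonpos hp1 hle (by linarith)
  have hmul : (2 * (1 - r)) ^ (1 - a) = 2 ^ (1 - a) * (1 - r) ^ (1 - a) :=
    Real.mul_rpow (by norm_num) hp2.le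
  have h2 : (0:ℝ) < 2 ^ (1 - a) := Real.rpow_pos_of_pos (by norm_num) _
  have hcanc : (2:ℝ) ^ (a - 1) * 2 ^ (1 - a) = 1 := by
    rw [← Real.rpow_add (by norm_num : (0:ℝ) < 2)]
    norm_num
  calc (1 - r) ^ (1 - a) = (2 ^ (a-1) * 2 ^ (1-a)) * (1 - r) ^ (1 - a) := by rw [hcanc]; ring
    _ = 2 ^ (a-1) * ((2 * (1 - r)) ^ (1 - a)) := by rw [hmul]; ring
    _ ≤ 2 ^ (a-1) * (1 - r ^ 2) ^ (1 - a) := by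
        exact mul_le_mul_of_nonneg_left key (Real.rpow_nonneg (by norm_num) _)

lemma one_le_weight {r : ℝ} (h0 : 0 ≤ r) (h1 : r < 1) {a : ℝ} (ha : 1 ≤ a) :
    1 ≤ (1 - r ^ 2) ^ (1 - a) :=
  Real.one_le_rpow_of_pos_of_le_one_of_nonpos (by nlinarith) (by nlinarith) (by linarith)

lemma deriv_growth {α : ℝ} (hα : 1 < α) {f : ℂ → ℂ} (hf : AnalyticOnNhd ℂ f uD) {M : ℝ}
    (h : ∀ z ∈ uD, zygS α f z ≤ M) {w : ℂ} (hw : w ∈ uD) :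
    ‖deriv f w‖ ≤ (‖deriv f 0‖ + M * (2 ^ (α - 1) / (α - 1))) * (1 - ‖w‖ ^ 2) ^ (1 - α) := by
  set r : ℝ := ‖w‖ with hr
  have hr0 : 0 ≤ r := norm_nonneg w
  have hr1 : r < 1 := mem_uD.1 hw
  have hM0 : 0 ≤ M := le_trans (zygS_nonneg α f zero_mem_uD) (h 0 zero_mem_uD)
  have hα0 : (0:ℝ) < α - 1 := by linarith
  -- FTC representation
  have hcont2 : ContinuousOn (deriv (deriv f)) uD := (hf.deriv.deriv).continuousOn
  have hmap : ∀ t ∈ Set.Icc (0:ℝ) 1, (t:ℂ) * w ∈ uD := fun t ht => smul_mem_uD hw ht.1 ht.2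
  have hcontI : ContinuousOn (fun t : ℝ => w * deriv (deriv f) ((t:ℂ) * w)) (Set.Icc (0:ℝ) 1) := by
    apply continuousOn_const.mul
    exact hcont2.comp ((Complex.continuous_ofReal.continuousOn).mul continuousOn_const)
      (fun t ht => hmap t ht)
  have hII : IntervalIntegrable (fun t : ℝ => w * deriv (deriv f) ((t:ℂ) * w)) volume 0 1 := by
    apply ContinuousOn.intervalIntegrable
    rwa [Set.uIcc_of_le zero_le_one]
  have hFTC : deriv f w = deriv f 0 + ∫ t in (0:ℝ)..1, w * deriv (deriv f) ((t:ℂ) * w) := by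
    have hψ : ∀ t ∈ Set.uIcc (0:ℝ) 1,
        HasDerivAt (fun t : ℝ => deriv f ((t:ℂ) * w)) (w * deriv (deriv f) ((t:ℂ) * w)) t := by
      intro t ht
      rw [Set.uIcc_of_le zero_le_one] at ht
      have htw : (t:ℂ) * w ∈ uD := hmap t ht
      have hfd : HasDerivAt (deriv f) (deriv (deriv f) ((t:ℂ)*w)) ((t:ℂ)*w) :=
        ((hf.deriv _ htw).differentiableAt).hasDerivAt
      have hlin : HasDerivAt (fun s : ℂ => s * w) w (t:ℂ) := by
        simpa using (hasDerivAt_id (t:ℂ)).mul_const w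
      have := (hfd.comp (t:ℂ) hlin).comp_ofReal
      refine this.congr_deriv ?_
      ring
    have := intervalIntegral.integral_eq_sub_of_hasDerivAt hψ hII
    rw [this]
    simp
  -- pointwise bound
  have hptw : ∀ t ∈ Set.uIoc (0:ℝ) 1,
      ‖w * deriv (deriv f) ((t:ℂ) * w)‖ ≤ M * r * (1 - t * r) ^ (-α) := by
    intro t ht
    rw [Set.uIoc_of_le zero_le_one] at ht
    have ht0 : 0 ≤ t := ht.1.le
    have ht1 : t ≤ 1 := ht.2
    have htw : (t:ℂ) * w ∈ uD := smul_mem_uD hw ht0 ht1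
    have hnorm : ‖(t:ℂ) * w‖ = t * r := by
      rw [norm_mul, Complex.norm_real, Real.norm_eq_abs, _root_.abs_of_nonneg ht0]
    have htr : t * r ≤ r := by nlinarith
    have htr0 : 0 ≤ t * r := mul_nonneg ht0 hr0
    have hbase : (0:ℝ) < 1 - (t * r) ^ 2 := by nlinarith
    have hbase2 : (0:ℝ) < 1 - t * r := by nlinarith
    have hz := h _ htw
    rw [zygS, hnorm] at hz
    have hpow : (0:ℝ) < (1 - (t*r)^2) ^ α := Real.rpow_pos_of_pos hbase _
    have hle1 : ‖deriv (deriv f) ((t:ℂ)*w)‖ ≤ M * ((1 - (t*r)^2) ^ α)⁻¹ := by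
      calc ‖deriv (deriv f) ((t:ℂ)*w)‖
          = ((1 - (t*r)^2) ^ α)⁻¹ * ((1 - (t*r)^2) ^ α * ‖deriv (deriv f) ((t:ℂ)*w)‖) := by
            rw [← mul_assoc, inv_mul_cancel₀ hpow.ne', one_mul]
        _ ≤ ((1 - (t*r)^2) ^ α)⁻¹ * M := mul_le_mul_of_nonneg_left hz (by positivity)
        _ = M * ((1 - (t*r)^2) ^ α)⁻¹ := by ring
    have hmono : ((1 - (t*r)^2) ^ α)⁻¹ ≤ (1 - t*r) ^ (-α) := by
      rw [← Real.rpow_neg hbase.le]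
      exact Real.rpow_le_rpow_of_nonpos hbase2 (by nlinarith) (by linarith)
    calc ‖w * deriv (deriv f) ((t:ℂ) * w)‖ = r * ‖deriv (deriv f) ((t:ℂ)*w)‖ := by
          rw [norm_mul]
      _ ≤ r * (M * (1 - t*r) ^ (-α)) := by
          apply mul_le_mul_of_nonneg_left _ hr0
          exact le_trans hle1 (mul_le_mul_of_nonneg_left hmono hM0)
      _ = M * r * (1 - t * r) ^ (-α) := by ring
  -- integral of the bound
  have hbndII : IntervalIntegrable (fun t : ℝ => M * r * (1 - t * r) ^ (-α)) volume 0 1 := by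
    apply ContinuousOn.intervalIntegrable
    rw [Set.uIcc_of_le zero_le_one]
    apply continuousOn_const.mul
    apply ContinuousOn.rpow_const
    · exact (continuousOn_const.sub (continuousOn_id.mul continuousOn_const))
    · intro t ht
      left
      nlinarith [ht.1, ht.2]
  have hbndint : (∫ t in (0:ℝ)..1, M * r * (1 - t * r) ^ (-α))
      = M / (α - 1) * ((1 - r) ^ (1 - α) - 1) := by
    have hΦ : ∀ t ∈ Set.uIcc (0:ℝ) 1,
        HasDerivAt (fun t : ℝ => M / (α - 1) * (1 - t * r) ^ (1 - α))
          (M * r * (1 - t * r) ^ (-α)) t := by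
      intro t ht
      rw [Set.uIcc_of_le zero_le_one] at ht
      have hbase2 : (0:ℝ) < 1 - t * r := by nlinarith [ht.1, ht.2]
      have hlin : HasDerivAt (fun t : ℝ => 1 - t * r) (-r) t := by
        simpa using ((hasDerivAt_id t).mul_const r).const_sub 1
      have hrp : HasDerivAt (fun x : ℝ => x ^ (1 - α)) ((1 - α) * (1 - t*r) ^ (1 - α - 1)) (1 - t*r) :=
        Real.hasDerivAt_rpow_const (Or.inl hbase2.ne')
      have := ((hrp.comp t hlin).const_mul (M / (α - 1)))
      refine this.congr_deriv ?_
      have hexp : 1 - α - 1 = -α := by ring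
      rw [hexp]
      field_simp
      ring
    rw [intervalIntegral.integral_eq_sub_of_hasDerivAt hΦ hbndII]
    norm_num
    ring
  -- assemble
  have hnormint : ‖∫ t in (0:ℝ)..1, w * deriv (deriv f) ((t:ℂ) * w)‖
      ≤ M / (α - 1) * ((1 - r) ^ (1 - α) - 1) := by
    have habs := intervalIntegral.norm_integral_le_abs_of_norm_le
      ((ae_restrict_mem measurableSet_uIoc).mono hptw) hbndII
    rw [hbndint] at habs
    have h1r : (1:ℝ) ≤ (1 - r) ^ (1 - α) :=
      Real.one_le_rpow_of_pos_of_le_one_of_nonpos (by linarith) (by linarith) (by linarith)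
    have hge : 0 ≤ M / (α - 1) * ((1 - r) ^ (1 - α) - 1) :=
      mul_nonneg (by positivity) (by linarith)
    rwa [_root_.abs_of_nonneg hge] at habs
  have hw1 : ‖deriv f w‖ ≤ ‖deriv f 0‖ + M / (α - 1) * ((1 - r) ^ (1 - α) - 1) := by
    rw [hFTC]
    exact le_trans (norm_add_le _ _) (add_le_add le_rfl hnormint)
  have h2i := two_ineq hr0 hr1 hα
  have h1w := one_le_weight hr0 hr1 hα.le
  have hrw : (0:ℝ) ≤ (1 - r^2) ^ (1-α) := Real.rpow_nonneg (by nlinarith) _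
  calc ‖deriv f w‖ ≤ ‖deriv f 0‖ + M / (α - 1) * ((1 - r) ^ (1 - α) - 1) := hw1
    _ ≤ ‖deriv f 0‖ + M / (α - 1) * (1 - r) ^ (1 - α) := by
        have : M / (α - 1) * ((1 - r) ^ (1 - α) - 1) ≤ M / (α - 1) * (1 - r) ^ (1 - α) := by
          apply mul_le_mul_of_nonneg_left _ (by positivity)
          linarith
        linarith
    _ ≤ ‖deriv f 0‖ + M / (α - 1) * (2 ^ (α - 1) * (1 - r ^ 2) ^ (1 - α)) := by
        have := mul_le_mul_of_nonneg_left h2i (by positivity : (0:ℝ) ≤ M / (α-1))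
        linarith
    _ ≤ (‖deriv f 0‖ + M * (2 ^ (α - 1) / (α - 1))) * (1 - r ^ 2) ^ (1 - α) := by
        have e1 : M / (α - 1) * (2 ^ (α - 1) * (1 - r ^ 2) ^ (1 - α))
            = (M * (2 ^ (α - 1) / (α - 1))) * (1 - r ^ 2) ^ (1 - α) := by ring
        rw [e1]
        have : ‖deriv f 0‖ * 1 ≤ ‖deriv f 0‖ * (1 - r ^ 2) ^ (1 - α) :=
          mul_le_mul_of_nonneg_left h1w (norm_nonneg _)
        nlinarith [norm_nonneg (deriv f 0)]

/-! ### Test functions -/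

def qw (w : ℂ) : ℂ := (starRingEnd ℂ) w

def tF (α a b : ℝ) (w : ℂ) : ℂ → ℂ := fun z =>
  ((a * (1 - ‖w‖ ^ 2) ^ 2 : ℝ) : ℂ) * (1 - qw w * z) ^ ((-α : ℝ) : ℂ)
  + ((b * (1 - ‖w‖ ^ 2) ^ 3 : ℝ) : ℂ) * (1 - qw w * z) ^ ((-α - 1 : ℝ) : ℂ)

def tF1 (α a b : ℝ) (w : ℂ) : ℂ → ℂ := fun z =>
  ((a * (1 - ‖w‖ ^ 2) ^ 2 * α : ℝ) : ℂ) * qw w * (1 - qw w * z) ^ ((-α - 1 : ℝ) : ℂ)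
  + ((b * (1 - ‖w‖ ^ 2) ^ 3 * (α + 1) : ℝ) : ℂ) * qw w * (1 - qw w * z) ^ ((-α - 2 : ℝ) : ℂ)

def tF2 (α a b : ℝ) (w : ℂ) : ℂ → ℂ := fun z =>
  ((a * (1 - ‖w‖ ^ 2) ^ 2 * (α * (α + 1)) : ℝ) : ℂ) * (qw w) ^ 2
      * (1 - qw w * z) ^ ((-α - 2 : ℝ) : ℂ)
  + ((b * (1 - ‖w‖ ^ 2) ^ 3 * ((α + 1) * (α + 2)) : ℝ) : ℂ) * (qw w) ^ 2
      * (1 - qw w * z) ^ ((-α - 3 : ℝ) : ℂ)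

lemma base_re_pos {w z : ℂ} (hw : w ∈ uD) (hz : z ∈ uD) : (1 - qw w * z) ∈ Complex.slitPlane := by
  have h1 : ‖qw w * z‖ < 1 := by
    rw [norm_mul, qw, Complex.norm_conj]
    have := mem_uD.1 hw; have := mem_uD.1 hz
    nlinarith [norm_nonneg w, norm_nonneg z]
  apply Complex.mem_slitPlane_iff.2
  left
  have : (qw w * z).re ≤ ‖qw w * z‖ := Complex.re_le_norm _
  simp only [Complex.sub_re, Complex.one_re]
  linarith

lemma hasDerivAt_cpow_aux {w z : ℂ} (hw : w ∈ uD) (hz : z ∈ uD) (c : ℝ) :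
    HasDerivAt (fun z => (1 - qw w * z) ^ ((c : ℝ) : ℂ))
      (((-c : ℝ) : ℂ) * qw w * (1 - qw w * z) ^ ((c - 1 : ℝ) : ℂ)) z := by
  have hbase : HasDerivAt (fun z : ℂ => 1 - qw w * z) (-qw w) z := by
    simpa using ((hasDerivAt_id z).const_mul (qw w)).const_sub 1
  have := hbase.cpow_const (c := ((c : ℝ) : ℂ)) (base_re_pos hw hz)
  convert this using 1
  push_cast
  ring

lemma norm_cpow_real (x : ℂ) (c : ℝ) : ‖x ^ ((c : ℝ) : ℂ)‖ = ‖x‖ ^ c := by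
  exact Complex.norm_cpow_real x c

lemma base_bounds {w z : ℂ} (hw : w ∈ uD) (hz : z ∈ uD) :
    0 < ‖1 - qw w * z‖ ∧ 1 - ‖z‖ ^ 2 ≤ 2 * ‖1 - qw w * z‖ ∧
      1 - ‖w‖ ^ 2 ≤ 2 * ‖1 - qw w * z‖ := by
  have hwn := mem_uD.1 hw
  have hzn := mem_uD.1 hz
  have h1 : ‖qw w * z‖ = ‖w‖ * ‖z‖ := by rw [norm_mul, qw, Complex.norm_conj]
  have h2 : 1 - ‖w‖ * ‖z‖ ≤ ‖1 - qw w * z‖ := by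
    have := norm_sub_norm_le (1 : ℂ) (qw w * z)
    rw [norm_one, h1] at this
    linarith
  refine ⟨by nlinarith [norm_nonneg w, norm_nonneg z], by nlinarith [norm_nonneg w, norm_nonneg z],
    by nlinarith [norm_nonneg w, norm_nonneg z]⟩

lemma tF_hasDeriv {α a b : ℝ} {w z : ℂ} (hw : w ∈ uD) (hz : z ∈ uD) :
    HasDerivAt (tF α a b w) (tF1 α a b w z) z := by
  have h1 := (hasDerivAt_cpow_aux hw hz (-α)).const_mul ((a * (1 - ‖w‖ ^ 2) ^ 2 : ℝ) : ℂ)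
  have h2 := (hasDerivAt_cpow_aux hw hz (-α - 1)).const_mul ((b * (1 - ‖w‖ ^ 2) ^ 3 : ℝ) : ℂ)
  have := h1.add h2
  refine this.congr_deriv ?_
  have e2 : (-α - 1 - 1 : ℝ) = (-α - 2 : ℝ) := by ring
  rw [e2]
  simp only [tF1]
  push_cast
  ring

lemma tF1_hasDeriv {α a b : ℝ} {w z : ℂ} (hw : w ∈ uD) (hz : z ∈ uD) :
    HasDerivAt (tF1 α a b w) (tF2 α a b w z) z := by
  have h1 := (hasDerivAt_cpow_aux hw hz (-α - 1)).const_mul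
    (((a * (1 - ‖w‖ ^ 2) ^ 2 * α : ℝ) : ℂ) * qw w)
  have h2 := (hasDerivAt_cpow_aux hw hz (-α - 2)).const_mul
    (((b * (1 - ‖w‖ ^ 2) ^ 3 * (α + 1) : ℝ) : ℂ) * qw w)
  have := h1.add h2
  refine this.congr_deriv ?_
  have e2 : (-α - 1 - 1 : ℝ) = (-α - 2 : ℝ) := by ring
  have e3 : (-α - 2 - 1 : ℝ) = (-α - 3 : ℝ) := by ring
  rw [e2, e3]
  simp only [tF2]
  push_cast
  ring

lemma tF_derivs {α a b : ℝ} {w : ℂ} (hw : w ∈ uD) :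
    AnalyticOnNhd ℂ (tF α a b w) uD ∧
    (∀ z ∈ uD, deriv (tF α a b w) z = tF1 α a b w z) ∧
    (∀ z ∈ uD, deriv (deriv (tF α a b w)) z = tF2 α a b w z) := by
  have h1 : ∀ z ∈ uD, deriv (tF α a b w) z = tF1 α a b w z :=
    fun z hz => (tF_hasDeriv hw hz).deriv
  refine ⟨DifferentiableOn.analyticOnNhd
    (fun z hz => (tF_hasDeriv hw hz).differentiableAt.differentiableWithinAt) uD_open, h1, ?_⟩
  intro z hz
  have hev : deriv (tF α a b w) =ᶠ[nhds z] tF1 α a b w :=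
    Filter.eventually_of_mem (uD_open.mem_nhds hz) (fun x hx => h1 x hx)
  rw [hev.deriv_eq]
  exact (tF1_hasDeriv hw hz).deriv

lemma one_sub_qw_self {w : ℂ} : 1 - qw w * w = ((1 - ‖w‖ ^ 2 : ℝ) : ℂ) := by
  have : qw w * w = ((‖w‖ ^ 2 : ℝ) : ℂ) := by
    rw [qw, mul_comm, Complex.mul_conj]
    norm_cast
    rw [Complex.normSq_eq_norm_sq]
  rw [this]
  push_cast
  ring

lemma cpow_self_eval {w : ℂ} (hw : w ∈ uD) (c : ℝ) :
    (1 - qw w * w) ^ ((c : ℝ) : ℂ) = (((1 - ‖w‖ ^ 2) ^ c : ℝ) : ℂ) := by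
  rw [one_sub_qw_self, ← Complex.ofReal_cpow (one_sub_sq_pos hw).le]

lemma cast_shuffle (A B : ℝ) (q : ℂ) : (A:ℂ) * q * (B:ℂ) = ((A*B : ℝ):ℂ) * q := by
  push_cast; ring

lemma cast_shuffle2 (A B : ℝ) (q : ℂ) : (A:ℂ) * q ^ 2 * (B:ℂ) = ((A*B : ℝ):ℂ) * q ^ 2 := by
  push_cast; ring

lemma rpow_combine {x : ℝ} (hx : 0 < x) (k : ℕ) (e : ℝ) :
    x ^ k * x ^ (e : ℝ) = x ^ ((k : ℝ) + e) := by
  rw [← Real.rpow_natCast x k, ← Real.rpow_add hx]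

lemma combine1 {x : ℝ} (hx : 0 < x) (a b α : ℝ) (q : ℂ) :
    ((a * x ^ 2 * α : ℝ) : ℂ) * q * (((x ^ (-α - 1 : ℝ) : ℝ)) : ℂ)
      + ((b * x ^ 3 * (α + 1) : ℝ) : ℂ) * q * (((x ^ (-α - 2 : ℝ) : ℝ)) : ℂ)
    = (((a * α + b * (α + 1)) * x ^ (1 - α) : ℝ) : ℂ) * q := by
  rw [cast_shuffle, cast_shuffle, ← add_mul]
  congr 1
  rw [← Complex.ofReal_add]
  congr 1
  have e1 := rpow_combine hx 2 (-α - 1)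
  have e2 := rpow_combine hx 3 (-α - 2)
  rw [show ((2:ℕ):ℝ) + (-α - 1) = 1 - α by push_cast; ring] at e1
  rw [show ((3:ℕ):ℝ) + (-α - 2) = 1 - α by push_cast; ring] at e2
  linear_combination (a * α) * e1 + (b * (α + 1)) * e2

lemma combine2 {x : ℝ} (hx : 0 < x) (a b α : ℝ) (q : ℂ) :
    ((a * x ^ 2 * (α * (α + 1)) : ℝ) : ℂ) * q ^ 2 * (((x ^ (-α - 2 : ℝ) : ℝ)) : ℂ)
      + ((b * x ^ 3 * ((α + 1) * (α + 2)) : ℝ) : ℂ) * q ^ 2 * (((x ^ (-α - 3 : ℝ) : ℝ)) : ℂ)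
    = (((a * (α * (α + 1)) + b * ((α + 1) * (α + 2))) * x ^ (-α) : ℝ) : ℂ) * q ^ 2 := by
  rw [cast_shuffle2, cast_shuffle2, ← add_mul]
  congr 1
  rw [← Complex.ofReal_add]
  congr 1
  have e1 := rpow_combine hx 2 (-α - 2)
  have e2 := rpow_combine hx 3 (-α - 3)
  rw [show ((2:ℕ):ℝ) + (-α - 2) = -α by push_cast; ring] at e1
  rw [show ((3:ℕ):ℝ) + (-α - 3) = -α by push_cast; ring] at e2
  linear_combination (a * (α * (α + 1))) * e1 + (b * ((α + 1) * (α + 2))) * e2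

lemma tF1_at_self {α a b : ℝ} {w : ℂ} (hw : w ∈ uD) :
    tF1 α a b w w = (((a * α + b * (α + 1)) * (1 - ‖w‖ ^ 2) ^ (1 - α) : ℝ) : ℂ) * qw w := by
  rw [tF1, cpow_self_eval hw, cpow_self_eval hw]
  exact combine1 (one_sub_sq_pos hw) a b α (qw w)

lemma tF2_at_self {α a b : ℝ} {w : ℂ} (hw : w ∈ uD) :
    tF2 α a b w w = (((a * (α * (α + 1)) + b * ((α + 1) * (α + 2))) * (1 - ‖w‖ ^ 2) ^ (-α) : ℝ) : ℂ)
      * (qw w) ^ 2 := by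
  rw [tF2, cpow_self_eval hw, cpow_self_eval hw]
  exact combine2 (one_sub_sq_pos hw) a b α (qw w)

lemma pow_prod_bound {s x t : ℝ} (hs : 0 ≤ s) (ht : 0 < t) (hx : 0 ≤ x)
    (h1 : s ≤ 2 * t) (h2 : x ≤ 2 * t) {α : ℝ} (hα : 0 < α) (k : ℕ) {e : ℝ}
    (he : e = -α - k) : s ^ α * (x ^ k * t ^ e) ≤ 2 ^ (α + k) := by
  have h2t : (0:ℝ) < 2 * t := by linarith
  have hsa : s ^ α ≤ (2 * t) ^ α := Real.rpow_le_rpow hs h1 hα.le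
  have hxk : x ^ k ≤ (2 * t) ^ k := pow_le_pow_left₀ hx h2 k
  have hte : (0:ℝ) ≤ t ^ e := Real.rpow_nonneg ht.le e
  calc s ^ α * (x ^ k * t ^ e) ≤ (2 * t) ^ α * ((2 * t) ^ k * t ^ e) := by
        apply mul_le_mul hsa (mul_le_mul_of_nonneg_right hxk hte)
          (mul_nonneg (pow_nonneg hx k) hte) (Real.rpow_nonneg h2t.le α)
    _ = 2 ^ (α + k) := by
        rw [← Real.rpow_natCast (2 * t) k, ← mul_assoc, ← Real.rpow_add h2t,
          Real.mul_rpow (by norm_num) ht.le, he, mul_assoc, ← Real.rpow_add ht]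
        norm_num

lemma tF_zygS_bound {α : ℝ} (hα : 1 < α) (a b : ℝ) {w : ℂ} (hw : w ∈ uD) {z : ℂ} (hz : z ∈ uD) :
    zygS α (tF α a b w) z
      ≤ |a| * (α * (α + 1)) * 2 ^ (α + 2) + |b| * ((α + 1) * (α + 2)) * 2 ^ (α + 3) := by
  rw [zygS, (tF_derivs hw).2.2 z hz]
  obtain ⟨ht, h1t, h2t⟩ := base_bounds hw hz
  set t : ℝ := ‖1 - qw w * z‖ with htd
  set x : ℝ := 1 - ‖w‖ ^ 2 with hxd
  set s : ℝ := 1 - ‖z‖ ^ 2 with hsd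
  have hx : (0:ℝ) < x := one_sub_sq_pos hw
  have hs : (0:ℝ) < s := one_sub_sq_pos hz
  have hα0 : (0:ℝ) < α := by linarith
  have hqn : ‖qw w‖ ≤ 1 := by
    rw [qw, Complex.norm_conj]
    exact (mem_uD.1 hw).le
  have hA0 : (0:ℝ) ≤ |a| * (α * (α + 1)) := by positivity
  have hB0 : (0:ℝ) ≤ |b| * ((α + 1) * (α + 2)) := by positivity
  have hnorm : ‖tF2 α a b w z‖
      ≤ |a| * (α * (α + 1)) * (x ^ 2 * t ^ (-α - 2 : ℝ))
        + |b| * ((α + 1) * (α + 2)) * (x ^ 3 * t ^ (-α - 3 : ℝ)) := by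
    refine le_trans (norm_add_le _ _) (add_le_add ?_ ?_)
    · rw [norm_mul, norm_mul, norm_pow, Complex.norm_real, _root_.norm_cpow_real, Real.norm_eq_abs]
      rw [abs_mul, abs_mul, _root_.abs_of_nonneg (by positivity : (0:ℝ) ≤ x ^ 2),
        _root_.abs_of_nonneg (by positivity : (0:ℝ) ≤ α * (α + 1))]
      have hte : (0:ℝ) ≤ t ^ (-α - 2 : ℝ) := Real.rpow_nonneg ht.le _
      calc |a| * x ^ 2 * (α * (α + 1)) * ‖qw w‖ ^ 2 * t ^ (-α - 2 : ℝ)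
          ≤ |a| * x ^ 2 * (α * (α + 1)) * 1 ^ 2 * t ^ (-α - 2 : ℝ) := by
            apply mul_le_mul_of_nonneg_right _ hte
            apply mul_le_mul_of_nonneg_left (pow_le_pow_left₀ (norm_nonneg _) hqn 2)
            positivity
        _ = |a| * (α * (α + 1)) * (x ^ 2 * t ^ (-α - 2 : ℝ)) := by ring
    · rw [norm_mul, norm_mul, norm_pow, Complex.norm_real, _root_.norm_cpow_real, Real.norm_eq_abs]
      rw [abs_mul, abs_mul, _root_.abs_of_nonneg (by positivity : (0:ℝ) ≤ x ^ 3),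
        _root_.abs_of_nonneg (by positivity : (0:ℝ) ≤ (α + 1) * (α + 2))]
      have hte : (0:ℝ) ≤ t ^ (-α - 3 : ℝ) := Real.rpow_nonneg ht.le _
      calc |b| * x ^ 3 * ((α + 1) * (α + 2)) * ‖qw w‖ ^ 2 * t ^ (-α - 3 : ℝ)
          ≤ |b| * x ^ 3 * ((α + 1) * (α + 2)) * 1 ^ 2 * t ^ (-α - 3 : ℝ) := by
            apply mul_le_mul_of_nonneg_right _ hte
            apply mul_le_mul_of_nonneg_left (pow_le_pow_left₀ (norm_nonneg _) hqn 2)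
            positivity
        _ = |b| * ((α + 1) * (α + 2)) * (x ^ 3 * t ^ (-α - 3 : ℝ)) := by ring
  have hsa : (0:ℝ) ≤ s ^ α := Real.rpow_nonneg hs.le α
  calc s ^ α * ‖tF2 α a b w z‖
      ≤ s ^ α * (|a| * (α * (α + 1)) * (x ^ 2 * t ^ (-α - 2 : ℝ))
          + |b| * ((α + 1) * (α + 2)) * (x ^ 3 * t ^ (-α - 3 : ℝ))) :=
        mul_le_mul_of_nonneg_left hnorm hsa
    _ = |a| * (α * (α + 1)) * (s ^ α * (x ^ 2 * t ^ (-α - 2 : ℝ)))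
        + |b| * ((α + 1) * (α + 2)) * (s ^ α * (x ^ 3 * t ^ (-α - 3 : ℝ))) := by ring
    _ ≤ |a| * (α * (α + 1)) * 2 ^ (α + 2) + |b| * ((α + 1) * (α + 2)) * 2 ^ (α + 3) := by
        apply add_le_add
        · apply mul_le_mul_of_nonneg_left _ hA0
          exact pow_prod_bound hs.le ht hx.le h1t h2t hα0 2 (by push_cast; ring)
        · apply mul_le_mul_of_nonneg_left _ hB0
          exact pow_prod_bound hs.le ht hx.le h1t h2t hα0 3 (by push_cast; ring)

lemma sSup_zygS_le {a : ℝ} {f : ℂ → ℂ} {M : ℝ} (hM : 0 ≤ M) (h : ∀ z ∈ uD, zygS a f z ≤ M) :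
    sSup (zygS a f '' uD) ≤ M :=
  Real.sSup_le (by rintro y ⟨z, hz, rfl⟩; exact h z hz) hM

lemma sSup_zygS_nonneg (a : ℝ) (f : ℂ → ℂ) : 0 ≤ sSup (zygS a f '' uD) :=
  Real.sSup_nonneg (by rintro y ⟨z, hz, rfl⟩; exact zygS_nonneg a f hz)

lemma zygS_le_zNorm {b : ℝ} {f : ℂ → ℂ} (hmem : memZ b f) {z : ℂ} (hz : z ∈ uD) :
    zygS b f z ≤ zNorm b f := by
  obtain ⟨han, M, hM⟩ := hmem
  have hbdd : BddAbove (zygS b f '' uD) := ⟨M, by rintro y ⟨z, hz, rfl⟩; exact hM z hz⟩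
  have h1 : zygS b f z ≤ sSup (zygS b f '' uD) := le_csSup hbdd (Set.mem_image_of_mem _ hz)
  have h2 : sSup (zygS b f '' uD) ≤ zNorm b f := by
    rw [zNorm]
    have := norm_nonneg (f 0); have := norm_nonneg (deriv f 0)
    linarith
  linarith

lemma zNorm_nonneg (a : ℝ) (f : ℂ → ℂ) : 0 ≤ zNorm a f := by
  rw [zNorm]
  have := norm_nonneg (f 0); have := norm_nonneg (deriv f 0)
  have := sSup_zygS_nonneg a f
  linarith

lemma tF_memZ {α : ℝ} (hα : 1 < α) (a b : ℝ) {w : ℂ} (hw : w ∈ uD) :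
    memZ α (tF α a b w) :=
  ⟨(tF_derivs hw).1.analyticOn, _, fun z hz => tF_zygS_bound hα a b hw hz⟩

lemma tF_zNorm_le {α : ℝ} (hα : 1 < α) (a b : ℝ) {w : ℂ} (hw : w ∈ uD) :
    zNorm α (tF α a b w)
      ≤ (|a| + |b|) + (|a| * α + |b| * (α + 1))
        + (|a| * (α * (α + 1)) * 2 ^ (α + 2) + |b| * ((α + 1) * (α + 2)) * 2 ^ (α + 3)) := by
  have hx : (0:ℝ) < 1 - ‖w‖ ^ 2 := one_sub_sq_pos hw
  have hx1 : 1 - ‖w‖ ^ 2 ≤ 1 := by nlinarith [norm_nonneg w]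
  have h0 : ‖tF α a b w 0‖ ≤ |a| + |b| := by
    have : tF α a b w 0 = ((a * (1 - ‖w‖ ^ 2) ^ 2 : ℝ) : ℂ) + ((b * (1 - ‖w‖ ^ 2) ^ 3 : ℝ) : ℂ) := by
      rw [tF]
      simp [Complex.one_cpow]
    rw [this]
    refine le_trans (norm_add_le _ _) ?_
    rw [Complex.norm_real, Complex.norm_real, Real.norm_eq_abs, Real.norm_eq_abs,
      abs_mul, abs_mul]
    have e1 : |(1 - ‖w‖ ^ 2) ^ 2| ≤ 1 := by rw [_root_.abs_pow, _root_.abs_of_nonneg hx.le]; nlinarith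
    have e2 : |(1 - ‖w‖ ^ 2) ^ 3| ≤ 1 := by rw [_root_.abs_pow, _root_.abs_of_nonneg hx.le]; nlinarith
    nlinarith [abs_nonneg a, abs_nonneg b]
  have h1 : ‖deriv (tF α a b w) 0‖ ≤ |a| * α + |b| * (α + 1) := by
    rw [(tF_derivs hw).2.1 0 zero_mem_uD, tF1]
    have hq : ‖qw w‖ ≤ 1 := by rw [qw, Complex.norm_conj]; exact (mem_uD.1 hw).le
    have e1 : |(1 - ‖w‖ ^ 2) ^ 2| ≤ 1 := by
      rw [_root_.abs_pow, _root_.abs_of_nonneg hx.le]; nlinarith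
    have e2 : |(1 - ‖w‖ ^ 2) ^ 3| ≤ 1 := by
      rw [_root_.abs_pow, _root_.abs_of_nonneg hx.le]; nlinarith
    refine le_trans (norm_add_le _ _) (add_le_add ?_ ?_)
    · rw [norm_mul, norm_mul, Complex.norm_real, Real.norm_eq_abs, _root_.norm_cpow_real]
      simp only [mul_zero, sub_zero, norm_one, Real.one_rpow, mul_one]
      rw [abs_mul, abs_mul]
      rw [_root_.abs_of_nonneg (by linarith : (0:ℝ) ≤ α)]
      calc |a| * |(1 - ‖w‖ ^ 2) ^ 2| * α * ‖qw w‖ ≤ |a| * 1 * α * 1 := by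
            gcongr <;> first | exact e1 | exact hq | positivity
        _ = |a| * α := by ring
    · rw [norm_mul, norm_mul, Complex.norm_real, Real.norm_eq_abs, _root_.norm_cpow_real]
      simp only [mul_zero, sub_zero, norm_one, Real.one_rpow, mul_one]
      rw [abs_mul, abs_mul]
      rw [_root_.abs_of_nonneg (by linarith : (0:ℝ) ≤ α + 1)]
      calc |b| * |(1 - ‖w‖ ^ 2) ^ 3| * (α + 1) * ‖qw w‖ ≤ |b| * 1 * (α + 1) * 1 := by
            gcongr <;> first | exact e2 | exact hq | positivity
        _ = |b| * (α + 1) := by ring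
  have h2 : sSup (zygS α (tF α a b w) '' uD)
      ≤ |a| * (α * (α + 1)) * 2 ^ (α + 2) + |b| * ((α + 1) * (α + 2)) * 2 ^ (α + 3) :=
    sSup_zygS_le (by positivity) (fun z hz => tF_zygS_bound hα a b hw hz)
  rw [zNorm]
  linarith

lemma idf_derivs : deriv (fun z : ℂ => z) = (fun _ => (1:ℂ)) ∧
    deriv (deriv (fun z : ℂ => z)) = (fun _ => (0:ℂ)) := by
  have h1 : deriv (fun z : ℂ => z) = fun _ => (1:ℂ) := funext fun z => (hasDerivAt_id z).deriv
  refine ⟨h1, ?_⟩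
  rw [h1]
  exact funext fun z => deriv_const z 1

lemma idf_memZ (α : ℝ) : memZ α (fun z : ℂ => z) := by
  refine ⟨(differentiable_id.differentiableOn.analyticOnNhd uD_open).analyticOn, 0, ?_⟩
  intro z hz
  rw [zygS, idf_derivs.2]
  simp

lemma idf_zNorm (α : ℝ) : zNorm α (fun z : ℂ => z) = 1 := by
  rw [zNorm, idf_derivs.1]
  have h1 : sSup (zygS α (fun z : ℂ => z) '' uD) = 0 := by
    refine le_antisymm (sSup_zygS_le le_rfl ?_) (sSup_zygS_nonneg _ _)
    intro z hz
    rw [zygS, idf_derivs.2]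
    simp
  rw [h1]
  simp

def sqf : ℂ → ℂ := fun z => z ^ 2 / 2

lemma sqf_derivs : deriv sqf = (fun z : ℂ => z) ∧
    deriv (deriv sqf) = (fun _ => (1:ℂ)) := by
  have h1 : deriv sqf = fun z : ℂ => z := by
    funext z
    have : HasDerivAt sqf z z := by
      have := (hasDerivAt_pow 2 z).div_const 2
      exact this.congr_deriv (by norm_num)
    exact this.deriv
  exact ⟨h1, by rw [h1]; exact idf_derivs.1⟩

lemma sqf_memZ (α : ℝ) (hα : 0 < α) : memZ α sqf := by
  refine ⟨(((differentiable_pow 2).div_const 2).differentiableOn.analyticOnNhd uD_open).analyticOn,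
    1, ?_⟩
  intro z hz
  rw [zygS, sqf_derivs.2]
  simp only [norm_one, mul_one]
  exact Real.rpow_le_one (one_sub_sq_pos hz).le (by nlinarith [norm_nonneg z]) hα.le

lemma sqf_zNorm (α : ℝ) (hα : 0 < α) : zNorm α sqf ≤ 1 := by
  rw [zNorm]
  have h1 : sSup (zygS α sqf '' uD) ≤ 1 := by
    refine sSup_zygS_le zero_le_one ?_
    intro z hz
    rw [zygS, sqf_derivs.2]
    simp only [norm_one, mul_one]
    exact Real.rpow_le_one (one_sub_sq_pos hz).le (by nlinarith [norm_nonneg z]) hα.le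
  have h2 : sqf 0 = 0 := by simp [sqf]
  have h3 : deriv sqf 0 = 0 := by rw [sqf_derivs.1]
  rw [h2, h3]
  simp only [norm_zero]
  linarith

lemma norm_qw (w : ℂ) : ‖qw w‖ = ‖w‖ := by rw [qw, Complex.norm_conj]

lemma forward_dir {α β : ℝ} (hα : 1 < α) (hβ : 0 < β) {φ g : ℂ → ℂ}
    (hφ : AnalyticOnNhd ℂ φ uD) (hφm : Set.MapsTo φ uD uD) (hg : AnalyticOnNhd ℂ g uD)
    (hb : boundedOp α β (CphiVg g φ)) :
    (∃ M : ℝ, ∀ z ∈ uD, (1 - ‖z‖ ^ 2) ^ β * ‖funA g φ z‖ / (1 - ‖φ z‖ ^ 2) ^ α ≤ M) ∧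
    (∃ M : ℝ, ∀ z ∈ uD, (1 - ‖z‖ ^ 2) ^ β * ‖funB g φ z‖ / (1 - ‖φ z‖ ^ 2) ^ (α - 1) ≤ M) := by
  obtain ⟨hmap, C, hC0, hCb⟩ := hb
  have key : ∀ f, memZ α f → ∀ z ∈ uD,
      (1 - ‖z‖ ^ 2) ^ β * ‖deriv (deriv f) (φ z) * funA g φ z + deriv f (φ z) * funB g φ z‖
        ≤ C * zNorm α f := by
    intro f hf z hz
    have hfn : AnalyticOnNhd ℂ f uD := (uD_open.analyticOn_iff_analyticOnNhd).1 hf.1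
    have h3 := (Tf_facts hφ hφm hg hfn).2.2 z hz
    have hzy := zygS_le_zNorm (hmap f hf) hz
    rw [zygS, h3] at hzy
    exact le_trans hzy (hCb f hf)
  -- global bound on B
  have hBglob : ∀ z ∈ uD, (1 - ‖z‖ ^ 2) ^ β * ‖funB g φ z‖ ≤ C := by
    intro z hz
    have h := key (fun z => z) (idf_memZ α) z hz
    rw [idf_zNorm, idf_derivs.2, idf_derivs.1] at h
    simpa using h
  -- global bound on A
  have hAglob : ∀ z ∈ uD, (1 - ‖z‖ ^ 2) ^ β * ‖funA g φ z‖ ≤ 2 * C := by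
    intro z hz
    have h := key sqf (sqf_memZ α (by linarith)) z hz
    rw [sqf_derivs.2, sqf_derivs.1] at h
    have hle : C * zNorm α sqf ≤ C * 1 :=
      mul_le_mul_of_nonneg_left (sqf_zNorm α (by linarith)) hC0.le
    simp only [one_mul] at h
    have hs : (0:ℝ) ≤ (1 - ‖z‖ ^ 2) ^ β := Real.rpow_nonneg (one_sub_sq_pos hz).le _
    have htri : ‖funA g φ z‖ ≤ ‖funA g φ z + φ z * funB g φ z‖ + ‖φ z‖ * ‖funB g φ z‖ := by
      calc ‖funA g φ z‖ = ‖funA g φ z + φ z * funB g φ z - φ z * funB g φ z‖ := by ring_nf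
        _ ≤ ‖funA g φ z + φ z * funB g φ z‖ + ‖φ z * funB g φ z‖ := norm_sub_le _ _
        _ = ‖funA g φ z + φ z * funB g φ z‖ + ‖φ z‖ * ‖funB g φ z‖ := by rw [norm_mul]
    have hφz1 : ‖φ z‖ ≤ 1 := (mem_uD.1 (hφm hz)).le
    calc (1 - ‖z‖ ^ 2) ^ β * ‖funA g φ z‖
        ≤ (1 - ‖z‖ ^ 2) ^ β * (‖funA g φ z + φ z * funB g φ z‖ + ‖φ z‖ * ‖funB g φ z‖) :=
          mul_le_mul_of_nonneg_left htri hs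
      _ = (1 - ‖z‖ ^ 2) ^ β * ‖funA g φ z + φ z * funB g φ z‖
          + ‖φ z‖ * ((1 - ‖z‖ ^ 2) ^ β * ‖funB g φ z‖) := by ring
      _ ≤ C + 1 * C := by
          refine add_le_add (le_trans h hle |>.trans (by linarith)) ?_
          have := hBglob z hz
          have h0 : 0 ≤ (1 - ‖z‖ ^ 2) ^ β * ‖funB g φ z‖ := mul_nonneg hs (norm_nonneg _)
          exact mul_le_mul hφz1 this h0 zero_le_one
      _ = 2 * C := by ring
  constructor
  · -- condition on A
    set a : ℝ := -1 / α with had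
    set b : ℝ := 1 / (α + 1) with hbd
    set Λ : ℝ := (|a| + |b|) + (|a| * α + |b| * (α + 1))
        + (|a| * (α * (α + 1)) * 2 ^ (α + 2) + |b| * ((α + 1) * (α + 2)) * 2 ^ (α + 3)) with hΛd
    refine ⟨max ((2 * C) / (3 / 4 : ℝ) ^ α) (4 * (C * Λ)), ?_⟩
    intro z hz
    have hw : φ z ∈ uD := hφm hz
    set w : ℂ := φ z with hwd
    have hx : (0:ℝ) < 1 - ‖w‖ ^ 2 := one_sub_sq_pos hw
    have hxα : (0:ℝ) < (1 - ‖w‖ ^ 2) ^ α := Real.rpow_pos_of_pos hx _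
    rcases le_or_gt ‖w‖ (1 / 2) with hsmall | hbig
    · have hx34 : (3 / 4 : ℝ) ≤ 1 - ‖w‖ ^ 2 := by nlinarith [norm_nonneg w]
      have hrw : (3 / 4 : ℝ) ^ α ≤ (1 - ‖w‖ ^ 2) ^ α :=
        Real.rpow_le_rpow (by norm_num) hx34 (by linarith)
      refine le_trans (le_trans ?_ (le_max_left _ _)) le_rfl
      exact div_le_div₀ (by positivity) (hAglob z hz) (Real.rpow_pos_of_pos (by norm_num) α) hrw
    · -- use test function
      have hcoef1 : a * α + b * (α + 1) = 0 := by
        rw [had, hbd]; field_simp; ring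
      have hcoef2 : a * (α * (α + 1)) + b * ((α + 1) * (α + 2)) = 1 := by
        rw [had, hbd]; field_simp; ring
      have h := key (tF α a b w) (tF_memZ hα a b hw) z hz
      rw [← hwd] at h
      rw [(tF_derivs hw).2.1 w hw, (tF_derivs hw).2.2 w hw, tF1_at_self hw, tF2_at_self hw,
        hcoef1, hcoef2] at h
      simp only [zero_mul, Complex.ofReal_zero, one_mul, add_zero] at h
      have hnorm : ‖(((1 - ‖w‖ ^ 2) ^ (-α : ℝ) : ℝ) : ℂ) * (qw w) ^ 2 * funA g φ z‖
          = (1 - ‖w‖ ^ 2) ^ (-α : ℝ) * (‖w‖ ^ 2 * ‖funA g φ z‖) := by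
        rw [norm_mul, norm_mul, norm_pow, norm_qw, Complex.norm_real,
          Real.norm_eq_abs, _root_.abs_of_nonneg (Real.rpow_nonneg hx.le _)]
        ring
      rw [hnorm] at h
      have hΛb : C * zNorm α (tF α a b w) ≤ C * Λ :=
        mul_le_mul_of_nonneg_left (tF_zNorm_le hα a b hw) hC0.le
      have hq : (1 / 4 : ℝ) ≤ ‖w‖ ^ 2 := by nlinarith
      have hs : (0:ℝ) ≤ (1 - ‖z‖ ^ 2) ^ β := Real.rpow_nonneg (one_sub_sq_pos hz).le _
      have hkey2 : (1 - ‖z‖ ^ 2) ^ β * ‖funA g φ z‖ * (1 - ‖w‖ ^ 2) ^ (-α : ℝ) ≤ 4 * (C * Λ) := by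
        have e1 : (1 - ‖z‖ ^ 2) ^ β * ((1 - ‖w‖ ^ 2) ^ (-α:ℝ) * (‖w‖ ^ 2 * ‖funA g φ z‖))
            = ‖w‖ ^ 2 * ((1 - ‖z‖ ^ 2) ^ β * ‖funA g φ z‖ * (1 - ‖w‖ ^ 2) ^ (-α:ℝ)) := by ring
        rw [e1] at h
        have h4 := le_trans h hΛb
        nlinarith [mul_nonneg (mul_nonneg hs (norm_nonneg (funA g φ z)))
          (Real.rpow_nonneg hx.le (-α))]
      have hdiv : (1 - ‖z‖ ^ 2) ^ β * ‖funA g φ z‖ / (1 - ‖w‖ ^ 2) ^ α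
          = (1 - ‖z‖ ^ 2) ^ β * ‖funA g φ z‖ * (1 - ‖w‖ ^ 2) ^ (-α : ℝ) := by
        rw [Real.rpow_neg hx.le, div_eq_mul_inv]
      rw [hdiv]
      exact le_trans hkey2 (le_max_right _ _)
  · -- condition on B
    set a : ℝ := (α + 2) / α with had
    set b : ℝ := -1 with hbd
    set Λ : ℝ := (|a| + |b|) + (|a| * α + |b| * (α + 1))
        + (|a| * (α * (α + 1)) * 2 ^ (α + 2) + |b| * ((α + 1) * (α + 2)) * 2 ^ (α + 3)) with hΛd
    refine ⟨max (C / (3 / 4 : ℝ) ^ (α - 1)) (2 * (C * Λ)), ?_⟩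
    intro z hz
    have hw : φ z ∈ uD := hφm hz
    set w : ℂ := φ z with hwd
    have hx : (0:ℝ) < 1 - ‖w‖ ^ 2 := one_sub_sq_pos hw
    rcases le_or_gt ‖w‖ (1 / 2) with hsmall | hbig
    · have hx34 : (3 / 4 : ℝ) ≤ 1 - ‖w‖ ^ 2 := by nlinarith [norm_nonneg w]
      have hrw : (3 / 4 : ℝ) ^ (α - 1) ≤ (1 - ‖w‖ ^ 2) ^ (α - 1) :=
        Real.rpow_le_rpow (by norm_num) hx34 (by linarith)
      refine le_trans ?_ (le_max_left _ _)
      exact div_le_div₀ hC0.le (hBglob z hz) (Real.rpow_pos_of_pos (by norm_num) _) hrw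
    · have hcoef1 : a * α + b * (α + 1) = 1 := by
        rw [had, hbd]; field_simp; ring
      have hcoef2 : a * (α * (α + 1)) + b * ((α + 1) * (α + 2)) = 0 := by
        rw [had, hbd]; field_simp; ring
      have h := key (tF α a b w) (tF_memZ hα a b hw) z hz
      rw [← hwd] at h
      rw [(tF_derivs hw).2.1 w hw, (tF_derivs hw).2.2 w hw, tF1_at_self hw, tF2_at_self hw,
        hcoef1, hcoef2] at h
      simp only [zero_mul, Complex.ofReal_zero, one_mul, zero_add] at h
      have hnorm : ‖(((1 - ‖w‖ ^ 2) ^ (1 - α : ℝ) : ℝ) : ℂ) * qw w * funB g φ z‖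
          = (1 - ‖w‖ ^ 2) ^ (1 - α : ℝ) * (‖w‖ * ‖funB g φ z‖) := by
        rw [norm_mul, norm_mul, norm_qw, Complex.norm_real,
          Real.norm_eq_abs, _root_.abs_of_nonneg (Real.rpow_nonneg hx.le _)]
        ring
      rw [hnorm] at h
      have hΛb : C * zNorm α (tF α a b w) ≤ C * Λ :=
        mul_le_mul_of_nonneg_left (tF_zNorm_le hα a b hw) hC0.le
      have hs : (0:ℝ) ≤ (1 - ‖z‖ ^ 2) ^ β := Real.rpow_nonneg (one_sub_sq_pos hz).le _
      have hkey2 : (1 - ‖z‖ ^ 2) ^ β * ‖funB g φ z‖ * (1 - ‖w‖ ^ 2) ^ (1 - α : ℝ)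
          ≤ 2 * (C * Λ) := by
        have e1 : (1 - ‖z‖ ^ 2) ^ β * ((1 - ‖w‖ ^ 2) ^ (1-α:ℝ) * (‖w‖ * ‖funB g φ z‖))
            = ‖w‖ * ((1 - ‖z‖ ^ 2) ^ β * ‖funB g φ z‖ * (1 - ‖w‖ ^ 2) ^ (1-α:ℝ)) := by ring
        rw [e1] at h
        have h4 := le_trans h hΛb
        nlinarith [mul_nonneg (mul_nonneg hs (norm_nonneg (funB g φ z)))
          (Real.rpow_nonneg hx.le (1 - α))]
      have hdiv : (1 - ‖z‖ ^ 2) ^ β * ‖funB g φ z‖ / (1 - ‖w‖ ^ 2) ^ (α - 1)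
          = (1 - ‖z‖ ^ 2) ^ β * ‖funB g φ z‖ * (1 - ‖w‖ ^ 2) ^ (1 - α : ℝ) := by
        rw [show (1 - α : ℝ) = -(α - 1) by ring, Real.rpow_neg hx.le, div_eq_mul_inv]
      rw [hdiv]
      exact le_trans hkey2 (le_max_right _ _)

set_option maxHeartbeats 2000000 in
lemma backward_dir {α β : ℝ} (hα : 1 < α) (hβ : 0 < β) {φ g : ℂ → ℂ}
    (hφ : AnalyticOnNhd ℂ φ uD) (hφm : Set.MapsTo φ uD uD) (hg : AnalyticOnNhd ℂ g uD)
    {M₁ M₂ : ℝ}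
    (h1 : ∀ z ∈ uD, (1 - ‖z‖ ^ 2) ^ β * ‖funA g φ z‖ / (1 - ‖φ z‖ ^ 2) ^ α ≤ M₁)
    (h2 : ∀ z ∈ uD, (1 - ‖z‖ ^ 2) ^ β * ‖funB g φ z‖ / (1 - ‖φ z‖ ^ 2) ^ (α - 1) ≤ M₂) :
    boundedOp α β (CphiVg g φ) := by
  have hφ0 : φ 0 ∈ uD := hφm zero_mem_uD
  set r0 : ℝ := ‖φ 0‖ with hr0d
  have hr00 : 0 ≤ r0 := norm_nonneg _
  have hr01 : r0 < 1 := mem_uD.1 hφ0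
  have hx0 : (0:ℝ) < 1 - r0 ^ 2 := by nlinarith
  -- nonnegativity of M₁ M₂
  have hM10 : 0 ≤ M₁ :=
    le_trans (div_nonneg (mul_nonneg (Real.rpow_nonneg (one_sub_sq_pos zero_mem_uD).le β)
      (norm_nonneg _)) (Real.rpow_nonneg (one_sub_sq_pos hφ0).le α)) (h1 0 zero_mem_uD)
  have hM20 : 0 ≤ M₂ :=
    le_trans (div_nonneg (mul_nonneg (Real.rpow_nonneg (one_sub_sq_pos zero_mem_uD).le β)
      (norm_nonneg _)) (Real.rpow_nonneg (one_sub_sq_pos hφ0).le (α - 1))) (h2 0 zero_mem_uD)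
  -- multiplied forms
  have h1' : ∀ z ∈ uD, (1 - ‖z‖ ^ 2) ^ β * ‖funA g φ z‖ ≤ M₁ * (1 - ‖φ z‖ ^ 2) ^ α := by
    intro z hz
    have hp : (0:ℝ) < (1 - ‖φ z‖ ^ 2) ^ α := Real.rpow_pos_of_pos (one_sub_sq_pos (hφm hz)) _
    have := (div_le_iff₀ hp).1 (h1 z hz)
    linarith [this]
  have h2' : ∀ z ∈ uD, (1 - ‖z‖ ^ 2) ^ β * ‖funB g φ z‖ ≤ M₂ * (1 - ‖φ z‖ ^ 2) ^ (α - 1) := by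
    intro z hz
    have hp : (0:ℝ) < (1 - ‖φ z‖ ^ 2) ^ (α - 1) :=
      Real.rpow_pos_of_pos (one_sub_sq_pos (hφm hz)) _
    have := (div_le_iff₀ hp).1 (h2 z hz)
    linarith [this]
  -- bound for g on the closed ball of radius r0
  have hKsub : Metric.closedBall (0:ℂ) r0 ⊆ uD := by
    intro x hx
    rw [Metric.mem_closedBall, dist_zero_right] at hx
    exact mem_uD.2 (lt_of_le_of_lt hx hr01)
  obtain ⟨G₀, hG₀⟩ := (isCompact_closedBall (0:ℂ) r0).exists_bound_of_continuousOn
    (hg.continuousOn.mono hKsub)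
  have hG00 : 0 ≤ G₀ := le_trans (norm_nonneg _) (hG₀ (φ 0)
    (by rw [Metric.mem_closedBall, dist_zero_right]))
  set κ : ℝ := 2 ^ (α - 1) / (α - 1) with hκd
  have hκ0 : 0 ≤ κ := by
    have hα1 : (0:ℝ) < α - 1 := by linarith
    rw [hκd]
    positivity
  set c0 : ℝ := r0 * G₀ * (1 - r0 ^ 2) ^ (1 - α) with hc0d
  set c1 : ℝ := G₀ * (1 - r0 ^ 2) ^ (1 - α) * ‖deriv φ 0‖ with hc1d
  have hc00 : 0 ≤ c0 := by rw [hc0d]; positivity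
  have hc10 : 0 ≤ c1 := by rw [hc1d]; positivity
  set C : ℝ := (c0 + c1 + M₂) * (1 + κ) + M₁ + 1 with hCd
  have hC0 : 0 < C := by rw [hCd]; positivity
  have main : ∀ f, memZ α f → memZ β (CphiVg g φ f) ∧ zNorm β (CphiVg g φ f) ≤ C * zNorm α f := by
    intro f hf
    have hfa : AnalyticOnNhd ℂ f uD := (uD_open.analyticOn_iff_analyticOnNhd).1 hf.1
    obtain ⟨Mf, hMf⟩ := hf.2
    set S : ℝ := sSup (zygS α f '' uD) with hSd
    have hS0 : 0 ≤ S := sSup_zygS_nonneg α f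
    have hbdd : BddAbove (zygS α f '' uD) := ⟨Mf, by rintro y ⟨z, hz, rfl⟩; exact hMf z hz⟩
    have hSle : ∀ z ∈ uD, zygS α f z ≤ S :=
      fun z hz => le_csSup hbdd (Set.mem_image_of_mem _ hz)
    set Df : ℝ := ‖deriv f 0‖ + S * κ with hDfd
    have hDf0 : 0 ≤ Df := by
      rw [hDfd]
      have := norm_nonneg (deriv f 0)
      nlinarith
    have hgrow : ∀ w ∈ uD, ‖deriv f w‖ ≤ Df * (1 - ‖w‖ ^ 2) ^ (1 - α) := by
      intro w hw
      have := deriv_growth hα hfa hSle hw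
      rw [hDfd, hκd]
      exact this
    have hsec : ∀ w ∈ uD, ‖deriv (deriv f) w‖ ≤ S * (1 - ‖w‖ ^ 2) ^ (-α : ℝ) := by
      intro w hw
      have hx : (0:ℝ) < 1 - ‖w‖ ^ 2 := one_sub_sq_pos hw
      have hz := hSle w hw
      rw [zygS] at hz
      have hp : (0:ℝ) < (1 - ‖w‖ ^ 2) ^ α := Real.rpow_pos_of_pos hx _
      rw [Real.rpow_neg hx.le]
      calc ‖deriv (deriv f) w‖
          = ((1 - ‖w‖ ^ 2) ^ α)⁻¹ * ((1 - ‖w‖ ^ 2) ^ α * ‖deriv (deriv f) w‖) := by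
            rw [← mul_assoc, inv_mul_cancel₀ hp.ne', one_mul]
        _ ≤ ((1 - ‖w‖ ^ 2) ^ α)⁻¹ * S := mul_le_mul_of_nonneg_left hz (by positivity)
        _ = S * ((1 - ‖w‖ ^ 2) ^ α)⁻¹ := by ring
    have hfacts := Tf_facts hφ hφm hg hfa
    -- zygS bound
    have hTzyg : ∀ z ∈ uD, zygS β (CphiVg g φ f) z ≤ S * M₁ + Df * M₂ := by
      intro z hz
      rw [zygS, hfacts.2.2 z hz]
      have hw : φ z ∈ uD := hφm hz
      have hx : (0:ℝ) < 1 - ‖φ z‖ ^ 2 := one_sub_sq_pos hw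
      have hs : (0:ℝ) ≤ (1 - ‖z‖ ^ 2) ^ β := Real.rpow_nonneg (one_sub_sq_pos hz).le _
      have e1 : (1 - ‖φ z‖ ^ 2) ^ (-α : ℝ) * (1 - ‖φ z‖ ^ 2) ^ α = 1 := by
        rw [← Real.rpow_add hx]
        norm_num
      have e2 : (1 - ‖φ z‖ ^ 2) ^ (1 - α : ℝ) * (1 - ‖φ z‖ ^ 2) ^ (α - 1) = 1 := by
        rw [← Real.rpow_add hx]
        norm_num
      calc (1 - ‖z‖ ^ 2) ^ β
            * ‖deriv (deriv f) (φ z) * funA g φ z + deriv f (φ z) * funB g φ z‖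
          ≤ (1 - ‖z‖ ^ 2) ^ β
            * (‖deriv (deriv f) (φ z)‖ * ‖funA g φ z‖ + ‖deriv f (φ z)‖ * ‖funB g φ z‖) := by
            apply mul_le_mul_of_nonneg_left _ hs
            refine le_trans (norm_add_le _ _) ?_
            rw [norm_mul, norm_mul]
        _ = ‖deriv (deriv f) (φ z)‖ * ((1 - ‖z‖ ^ 2) ^ β * ‖funA g φ z‖)
            + ‖deriv f (φ z)‖ * ((1 - ‖z‖ ^ 2) ^ β * ‖funB g φ z‖) := by ring
        _ ≤ (S * (1 - ‖φ z‖ ^ 2) ^ (-α : ℝ)) * (M₁ * (1 - ‖φ z‖ ^ 2) ^ α)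
            + (Df * (1 - ‖φ z‖ ^ 2) ^ (1 - α : ℝ)) * (M₂ * (1 - ‖φ z‖ ^ 2) ^ (α - 1)) := by
            apply add_le_add
            · exact mul_le_mul (hsec _ hw) (h1' z hz)
                (mul_nonneg hs (norm_nonneg _)) (by positivity)
            · exact mul_le_mul (hgrow _ hw) (h2' z hz)
                (mul_nonneg hs (norm_nonneg _)) (by positivity)
        _ = S * M₁ * ((1 - ‖φ z‖ ^ 2) ^ (-α : ℝ) * (1 - ‖φ z‖ ^ 2) ^ α)
            + Df * M₂ * ((1 - ‖φ z‖ ^ 2) ^ (1 - α : ℝ) * (1 - ‖φ z‖ ^ 2) ^ (α - 1)) := by ring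
        _ = S * M₁ + Df * M₂ := by rw [e1, e2]; ring
    have hmem : memZ β (CphiVg g φ f) := ⟨hfacts.1.analyticOn, S * M₁ + Df * M₂, hTzyg⟩
    refine ⟨hmem, ?_⟩
    -- bound values at 0
    have hgbd : ∀ t : ℝ, 0 ≤ t → t ≤ 1 →
        ‖g ((t:ℂ) * φ 0)‖ ≤ G₀ ∧ ‖deriv f ((t:ℂ) * φ 0)‖ ≤ Df * (1 - r0 ^ 2) ^ (1 - α) := by
      intro t ht0 ht1
      have htφ : (t:ℂ) * φ 0 ∈ uD := smul_mem_uD hφ0 ht0 ht1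
      have hmemK : (t:ℂ) * φ 0 ∈ Metric.closedBall (0:ℂ) r0 := by
        rw [Metric.mem_closedBall, dist_zero_right, norm_mul, Complex.norm_real,
          Real.norm_eq_abs, _root_.abs_of_nonneg ht0]
        nlinarith [norm_nonneg (φ 0)]
      have hnt : ‖(t:ℂ) * φ 0‖ = t * r0 := by
        rw [norm_mul, Complex.norm_real, Real.norm_eq_abs, _root_.abs_of_nonneg ht0]
      refine ⟨hG₀ _ hmemK, ?_⟩
      have hgr := hgrow _ htφ
      rw [hnt] at hgr
      refine le_trans hgr (mul_le_mul_of_nonneg_left ?_ hDf0)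
      have ht2 : t * t ≤ 1 := by nlinarith
      have hsq : t * t * r0 ^ 2 ≤ 1 * r0 ^ 2 := mul_le_mul_of_nonneg_right ht2 (sq_nonneg r0)
      apply Real.rpow_le_rpow_of_nonpos (by linarith) (by nlinarith) (by linarith)
    have hTf0 : ‖CphiVg g φ f 0‖ ≤ c0 * Df := by
      rw [CphiVg]
      have hb : ∀ t ∈ Set.uIoc (0:ℝ) 1,
          ‖φ 0 * (deriv f ((t:ℂ) * φ 0) * g ((t:ℂ) * φ 0))‖
            ≤ r0 * (Df * (1 - r0 ^ 2) ^ (1 - α) * G₀) := by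
        intro t ht
        rw [Set.uIoc_of_le zero_le_one] at ht
        obtain ⟨hg1, hf1⟩ := hgbd t ht.1.le ht.2
        rw [norm_mul, norm_mul]
        have h1a : ‖deriv f ((t:ℂ) * φ 0)‖ * ‖g ((t:ℂ) * φ 0)‖
            ≤ Df * (1 - r0 ^ 2) ^ (1 - α) * G₀ :=
          mul_le_mul hf1 hg1 (norm_nonneg _) (by positivity)
        exact mul_le_mul_of_nonneg_left h1a hr00
      have := intervalIntegral.norm_integral_le_of_norm_le_const hb
      simp only [sub_zero, abs_one, mul_one] at this
      refine le_trans this (le_of_eq ?_)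
      rw [hc0d]
      ring
    have hTf'0 : ‖deriv (CphiVg g φ f) 0‖ ≤ c1 * Df := by
      rw [hfacts.2.1 0 zero_mem_uD]
      rw [norm_mul, norm_mul]
      obtain ⟨hg1, hf1⟩ := hgbd 1 zero_le_one le_rfl
      simp only [Complex.ofReal_one, one_mul] at hg1 hf1
      calc ‖deriv f (φ 0)‖ * ‖g (φ 0)‖ * ‖deriv φ 0‖
          ≤ (Df * (1 - r0 ^ 2) ^ (1 - α)) * G₀ * ‖deriv φ 0‖ := by
            apply mul_le_mul_of_nonneg_right _ (norm_nonneg _)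
            exact mul_le_mul hf1 hg1 (norm_nonneg _) (by positivity)
        _ = c1 * Df := by rw [hc1d]; ring
    -- assemble zNorm bound
    have hsupT : sSup (zygS β (CphiVg g φ f) '' uD) ≤ S * M₁ + Df * M₂ :=
      sSup_zygS_le (by positivity) hTzyg
    set N : ℝ := zNorm α f with hNd
    have hfN : ‖deriv f 0‖ ≤ N ∧ S ≤ N ∧ 0 ≤ N := by
      rw [hNd, zNorm, ← hSd]
      have := norm_nonneg (f 0); have := norm_nonneg (deriv f 0)
      refine ⟨by linarith, by linarith, by linarith⟩
    have hDfN : Df ≤ (1 + κ) * N := by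
      rw [hDfd]
      have h1N := hfN.1; have h2N := hfN.2.1; have h3N := hfN.2.2
      nlinarith
    have hSN : S ≤ N := hfN.2.1
    calc zNorm β (CphiVg g φ f)
        ≤ c0 * Df + c1 * Df + (S * M₁ + Df * M₂) := by
          rw [zNorm]
          have := hTf0; have := hTf'0; have := hsupT
          linarith
      _ ≤ c0 * ((1 + κ) * N) + c1 * ((1 + κ) * N) + (N * M₁ + ((1 + κ) * N) * M₂) := by
          have h3N := hfN.2.2
          refine add_le_add (add_le_add (mul_le_mul_of_nonneg_left hDfN hc00)
            (mul_le_mul_of_nonneg_left hDfN hc10)) (add_le_add ?_ ?_)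
          · exact mul_le_mul_of_nonneg_right hSN hM10
          · exact mul_le_mul_of_nonneg_right hDfN hM20
      _ = ((c0 + c1 + M₂) * (1 + κ) + M₁) * N := by ring
      _ ≤ C * N := by
          rw [hCd]
          have h3N := hfN.2.2
          nlinarith
  exact ⟨fun f hf => (main f hf).1, C, hC0, fun f hf => (main f hf).2⟩


theorem stmt_5 (α β : ℝ) (hα : 1 < α) (hβ : 0 < β)
    (φ g : ℂ → ℂ) (hφ : AnalyticOn ℂ φ uD) (hφm : Set.MapsTo φ uD uD)
    (hg : AnalyticOn ℂ g uD) :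
    boundedOp α β (CphiVg g φ) ↔
      ((∃ M : ℝ, ∀ z ∈ uD, (1 - ‖z‖ ^ 2) ^ β * ‖g (φ z) * (deriv φ z) ^ 2‖ / (1 - ‖φ z‖ ^ 2) ^ α ≤ M) ∧ (∃ M : ℝ, ∀ z ∈ uD, (1 - ‖z‖ ^ 2) ^ β * ‖deriv g (φ z) * (deriv φ z) ^ 2 + g (φ z) * deriv (deriv φ) z‖ / (1 - ‖φ z‖ ^ 2) ^ (α - 1) ≤ M)) := by
  have hφn : AnalyticOnNhd ℂ φ uD := (uD_open.analyticOn_iff_analyticOnNhd).1 hφ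
  have hgn : AnalyticOnNhd ℂ g uD := (uD_open.analyticOn_iff_analyticOnNhd).1 hg
  constructor
  · intro hb
    have h := forward_dir hα hβ hφn hφm hgn hb
    simpa only [funA, funB] using h
  · rintro ⟨⟨M₁, h1⟩, ⟨M₂, h2⟩⟩
    exact backward_dir hα hβ hφn hφm hgn (M₁ := M₁) (M₂ := M₂)
      (by simpa only [funA] using h1) (by simpa only [funB] using h2)
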